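/- Suppose a factorizable brane (six integers n^i, m^i with each pair coprime) satisfies both SUSY conditions Σ_I X^I U_I > 0 and Σ_I Y^I/U_I = 0 for some positive reals U_0, U_1, U_2, U_3, where X^I and Y^I are the standard products of winding numbers. If exactly one of the X^I is strictly positive and the other three are strictly negative (type A'), then this leads to a contradiction; i.e., a brane with one positive and three negative X^I cannot satisfy both SUSY conditions simultaneously. -/

import Mathlib

/-- The tadpole charges `X^I` of a factorizable 3-cycle. -/
def Xc (n1 m1 n2 m2 n3 m3 : ℤ) : Fin 4 → ℤ :=
  ![n1 * n2 * n3, -(n1 * m2 * m3), -(m1 * n2 * m3), -(m1 * m2 * n3)]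

/-- The charges `Y^I` of a factorizable 3-cycle. -/
def Yc (n1 m1 n2 m2 n3 m3 : ℤ) : Fin 4 → ℤ :=
  ![m1 * m2 * m3, -(m1 * n2 * n3), -(n1 * m2 * n3), -(n1 * n2 * m3)]

lemma helper_stmt6 (a b c d : ℝ) (ha : 0 < a) (hb : b < 0) (hc : c < 0) (hd : d < 0)
    (hs : 0 < a + b + c + d) (hinv : a⁻¹ + b⁻¹ + c⁻¹ + d⁻¹ = 0) : False := by
  have ha' : a ≠ 0 := ha.ne'
  have hb' : b ≠ 0 := hb.ne
  have hc' : c ≠ 0 := hc.ne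
  have hd' : d ≠ 0 := hd.ne
  field_simp at hinv
  nlinarith [mul_pos (mul_pos (neg_pos.2 hb) (neg_pos.2 hc)) (neg_pos.2 hd),
    mul_pos (neg_pos.2 hb) (neg_pos.2 hc), mul_pos (neg_pos.2 hb) (neg_pos.2 hd),
    mul_pos (neg_pos.2 hc) (neg_pos.2 hd), mul_pos ha (mul_pos (neg_pos.2 hb) (neg_pos.2 hc)),
    mul_pos hs (mul_pos (mul_pos (neg_pos.2 hb) (neg_pos.2 hc)) (neg_pos.2 hd))]

set_option maxHeartbeats 2000000 in
/-- A type `A'` brane (exactly one `X^I > 0`, the other three negative) cannot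
satisfy both SUSY conditions simultaneously. -/
theorem stmt_6 (n1 m1 n2 m2 n3 m3 : ℤ)
    (h1 : Int.gcd n1 m1 = 1) (h2 : Int.gcd n2 m2 = 1) (h3 : Int.gcd n3 m3 = 1)
    (U : Fin 4 → ℝ) (hU : ∀ I, 0 < U I)
    (hS1 : 0 < ∑ I, (Xc n1 m1 n2 m2 n3 m3 I : ℝ) * U I)
    (hS2 : ∑ I, (Yc n1 m1 n2 m2 n3 m3 I : ℝ) / U I = 0)
    (J : Fin 4) (hpos : 0 < Xc n1 m1 n2 m2 n3 m3 J)
    (hneg : ∀ I, I ≠ J → Xc n1 m1 n2 m2 n3 m3 I < 0) :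
    False := by
  simp only [Fin.sum_univ_four, Xc, Yc, Matrix.cons_val_zero, Matrix.cons_val_one,
    Matrix.head_cons, Matrix.cons_val_two, Matrix.tail_cons, Matrix.cons_val_three] at hS1 hS2
  push_cast at hS1 hS2
  have hU0 := (hU 0).ne'
  have hU1 := (hU 1).ne'
  have hU2 := (hU 2).ne'
  have hU3 := (hU 3).ne'
  fin_cases J
  · -- J = 0
    have hp1 : 0 < n1 * n2 * n3 := by simpa [Xc] using hpos
    have hp2 : 0 < n1 * m2 * m3 := by have := hneg 1 (by decide); simp [Xc] at this; omega
    have hp3 : 0 < m1 * n2 * m3 := by have := hneg 2 (by decide); simp [Xc] at this; omega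
    have hp4 : 0 < m1 * m2 * n3 := by have := hneg 3 (by decide); simp [Xc] at this; omega
    have e1 : (n1:ℝ) ≠ 0 := by intro h; rw [show n1 = 0 by exact_mod_cast h] at hp1; simp at hp1
    have e2 : (n2:ℝ) ≠ 0 := by intro h; rw [show n2 = 0 by exact_mod_cast h] at hp1; simp at hp1
    have e3 : (n3:ℝ) ≠ 0 := by intro h; rw [show n3 = 0 by exact_mod_cast h] at hp1; simp at hp1
    have e4 : (m2:ℝ) ≠ 0 := by intro h; rw [show m2 = 0 by exact_mod_cast h] at hp2; simp at hp2
    have e5 : (m3:ℝ) ≠ 0 := by intro h; rw [show m3 = 0 by exact_mod_cast h] at hp2; simp at hp2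
    have e6 : (m1:ℝ) ≠ 0 := by intro h; rw [show m1 = 0 by exact_mod_cast h] at hp3; simp at hp3
    have q1 : (0:ℝ) < (n1:ℝ) * n2 * n3 := by exact_mod_cast hp1
    have q2 : (0:ℝ) < (n1:ℝ) * m2 * m3 := by exact_mod_cast hp2
    have q3 : (0:ℝ) < (m1:ℝ) * n2 * m3 := by exact_mod_cast hp3
    have q4 : (0:ℝ) < (m1:ℝ) * m2 * n3 := by exact_mod_cast hp4
    refine helper_stmt6 ((n1:ℝ)*n2*n3 * U 0) (-((n1:ℝ)*m2*m3) * U 1) (-((m1:ℝ)*n2*m3) * U 2)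
      (-((m1:ℝ)*m2*n3) * U 3) (mul_pos q1 (hU 0)) ?_ ?_ ?_ ?_ ?_
    · nlinarith [mul_pos q2 (hU 1)]
    · nlinarith [mul_pos q3 (hU 2)]
    · nlinarith [mul_pos q4 (hU 3)]
    · linarith [hS1]
    · field_simp at hS2 ⊢
      linear_combination hS2
  · -- J = 1
    have hp1 : n1 * n2 * n3 < 0 := by have := hneg 0 (by decide); simp [Xc] at this; omega
    have hp2 : n1 * m2 * m3 < 0 := by have := hpos; simp [Xc] at this; omega
    have hp3 : 0 < m1 * n2 * m3 := by have := hneg 2 (by decide); simp [Xc] at this; omega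
    have hp4 : 0 < m1 * m2 * n3 := by have := hneg 3 (by decide); simp [Xc] at this; omega
    have e1 : (n1:ℝ) ≠ 0 := by intro h; rw [show n1 = 0 by exact_mod_cast h] at hp1; simp at hp1
    have e2 : (n2:ℝ) ≠ 0 := by intro h; rw [show n2 = 0 by exact_mod_cast h] at hp1; simp at hp1
    have e3 : (n3:ℝ) ≠ 0 := by intro h; rw [show n3 = 0 by exact_mod_cast h] at hp1; simp at hp1
    have e4 : (m2:ℝ) ≠ 0 := by intro h; rw [show m2 = 0 by exact_mod_cast h] at hp2; simp at hp2
    have e5 : (m3:ℝ) ≠ 0 := by intro h; rw [show m3 = 0 by exact_mod_cast h] at hp2; simp at hp2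
    have e6 : (m1:ℝ) ≠ 0 := by intro h; rw [show m1 = 0 by exact_mod_cast h] at hp3; simp at hp3
    have q1 : ((n1:ℝ) * n2 * n3 : ℝ) < 0 := by exact_mod_cast hp1
    have q2 : ((n1:ℝ) * m2 * m3 : ℝ) < 0 := by exact_mod_cast hp2
    have q3 : (0:ℝ) < (m1:ℝ) * n2 * m3 := by exact_mod_cast hp3
    have q4 : (0:ℝ) < (m1:ℝ) * m2 * n3 := by exact_mod_cast hp4
    refine helper_stmt6 (-((n1:ℝ)*m2*m3) * U 1) ((n1:ℝ)*n2*n3 * U 0) (-((m1:ℝ)*n2*m3) * U 2)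
      (-((m1:ℝ)*m2*n3) * U 3) (mul_pos (neg_pos.2 q2) (hU 1)) ?_ ?_ ?_ ?_ ?_
    · exact mul_neg_of_neg_of_pos q1 (hU 0)
    · nlinarith [mul_pos q3 (hU 2)]
    · nlinarith [mul_pos q4 (hU 3)]
    · linarith [hS1]
    · field_simp at hS2 ⊢
      linear_combination hS2
  · -- J = 2
    have hp1 : n1 * n2 * n3 < 0 := by have := hneg 0 (by decide); simp [Xc] at this; omega
    have hp2 : 0 < n1 * m2 * m3 := by have := hneg 1 (by decide); simp [Xc] at this; omega
    have hp3 : m1 * n2 * m3 < 0 := by have := hpos; simp [Xc] at this; omega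
    have hp4 : 0 < m1 * m2 * n3 := by have := hneg 3 (by decide); simp [Xc] at this; omega
    have e1 : (n1:ℝ) ≠ 0 := by intro h; rw [show n1 = 0 by exact_mod_cast h] at hp1; simp at hp1
    have e2 : (n2:ℝ) ≠ 0 := by intro h; rw [show n2 = 0 by exact_mod_cast h] at hp1; simp at hp1
    have e3 : (n3:ℝ) ≠ 0 := by intro h; rw [show n3 = 0 by exact_mod_cast h] at hp1; simp at hp1
    have e4 : (m2:ℝ) ≠ 0 := by intro h; rw [show m2 = 0 by exact_mod_cast h] at hp2; simp at hp2
    have e5 : (m3:ℝ) ≠ 0 := by intro h; rw [show m3 = 0 by exact_mod_cast h] at hp2; simp at hp2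
    have e6 : (m1:ℝ) ≠ 0 := by intro h; rw [show m1 = 0 by exact_mod_cast h] at hp3; simp at hp3
    have q1 : ((n1:ℝ) * n2 * n3 : ℝ) < 0 := by exact_mod_cast hp1
    have q2 : (0:ℝ) < (n1:ℝ) * m2 * m3 := by exact_mod_cast hp2
    have q3 : ((m1:ℝ) * n2 * m3 : ℝ) < 0 := by exact_mod_cast hp3
    have q4 : (0:ℝ) < (m1:ℝ) * m2 * n3 := by exact_mod_cast hp4
    refine helper_stmt6 (-((m1:ℝ)*n2*m3) * U 2) ((n1:ℝ)*n2*n3 * U 0) (-((n1:ℝ)*m2*m3) * U 1)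
      (-((m1:ℝ)*m2*n3) * U 3) (mul_pos (neg_pos.2 q3) (hU 2)) ?_ ?_ ?_ ?_ ?_
    · exact mul_neg_of_neg_of_pos q1 (hU 0)
    · nlinarith [mul_pos q2 (hU 1)]
    · nlinarith [mul_pos q4 (hU 3)]
    · linarith [hS1]
    · field_simp at hS2 ⊢
      linear_combination hS2
  · -- J = 3
    have hp1 : n1 * n2 * n3 < 0 := by have := hneg 0 (by decide); simp [Xc] at this; omega
    have hp2 : 0 < n1 * m2 * m3 := by have := hneg 1 (by decide); simp [Xc] at this; omega
    have hp3 : 0 < m1 * n2 * m3 := by have := hneg 2 (by decide); simp [Xc] at this; omega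
    have hp4 : m1 * m2 * n3 < 0 := by have := hpos; simp [Xc] at this; omega
    have e1 : (n1:ℝ) ≠ 0 := by intro h; rw [show n1 = 0 by exact_mod_cast h] at hp1; simp at hp1
    have e2 : (n2:ℝ) ≠ 0 := by intro h; rw [show n2 = 0 by exact_mod_cast h] at hp1; simp at hp1
    have e3 : (n3:ℝ) ≠ 0 := by intro h; rw [show n3 = 0 by exact_mod_cast h] at hp1; simp at hp1
    have e4 : (m2:ℝ) ≠ 0 := by intro h; rw [show m2 = 0 by exact_mod_cast h] at hp2; simp at hp2
    have e5 : (m3:ℝ) ≠ 0 := by intro h; rw [show m3 = 0 by exact_mod_cast h] at hp2; simp at hp2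
    have e6 : (m1:ℝ) ≠ 0 := by intro h; rw [show m1 = 0 by exact_mod_cast h] at hp3; simp at hp3
    have q1 : ((n1:ℝ) * n2 * n3 : ℝ) < 0 := by exact_mod_cast hp1
    have q2 : (0:ℝ) < (n1:ℝ) * m2 * m3 := by exact_mod_cast hp2
    have q3 : (0:ℝ) < (m1:ℝ) * n2 * m3 := by exact_mod_cast hp3
    have q4 : ((m1:ℝ) * m2 * n3 : ℝ) < 0 := by exact_mod_cast hp4
    refine helper_stmt6 (-((m1:ℝ)*m2*n3) * U 3) ((n1:ℝ)*n2*n3 * U 0) (-((n1:ℝ)*m2*m3) * U 1)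
      (-((m1:ℝ)*n2*m3) * U 2) (mul_pos (neg_pos.2 q4) (hU 3)) ?_ ?_ ?_ ?_ ?_
    · exact mul_neg_of_neg_of_pos q1 (hU 0)
    · nlinarith [mul_pos q2 (hU 1)]
    · nlinarith [mul_pos q3 (hU 2)]
    · linarith [hS1]
    · field_simp at hS2 ⊢
      linear_combination hS2
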